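/- (Khinchin) The set of squares {0, 1, 4, 9, 16, ...} is an essential component: for every set A of nonnegative integers with 0 < σ(A) < 1, one has σ(A + {n² : n ≥ 0}) > σ(A). -/

import Mathlib

open Pointwise Filter

/-- The counting function of a set of nonnegative integers: the number of
positive elements of `A` that are at most `n`. -/
noncomputable def countingFn (A : Set ℕ) (n : ℕ) : ℕ := (A ∩ Set.Icc 1 n).ncard

/-- The Shnirel'man density `σ(A) = inf_{n ≥ 1} A(n)/n`. -/
noncomputable def shnirelmanDensity (A : Set ℕ) : ℝ :=
  ⨅ n : {n : ℕ // 0 < n}, (countingFn A (n : ℕ) : ℝ) / ((n : ℕ) : ℝ)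

/-- The lower asymptotic density `d_L(A) = liminf_{n → ∞} A(n)/n`. -/
noncomputable def lowerDensity (A : Set ℕ) : ℝ :=
  liminf (fun n : ℕ => (countingFn A n : ℝ) / (n : ℝ)) atTop

/-- `A` is an additive basis of order `h`: every nonnegative integer is the
sum of exactly `h` elements of `A` (with repetitions allowed). -/
def IsBasisOfOrder (A : Set ℕ) (h : ℕ) : Prop :=
  ∀ n : ℕ, ∃ c : Fin h → ℕ, (∀ i, c i ∈ A) ∧ ∑ i, c i = n

/-- `A` is an asymptotic basis of order `h`: every sufficiently large integer
is the sum of exactly `h` elements of `A` (with repetitions allowed). -/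
def IsAsymptoticBasisOfOrder (A : Set ℕ) (h : ℕ) : Prop :=
  ∀ᶠ n : ℕ in atTop, ∃ c : Fin h → ℕ, (∀ i, c i ∈ A) ∧ ∑ i, c i = n

/-- A minimal asymptotic basis of order `h` is an asymptotic basis of order `h`
no proper subset of which is an asymptotic basis of order `h`. -/
def IsMinimalAsymptoticBasisOfOrder (A : Set ℕ) (h : ℕ) : Prop :=
  IsAsymptoticBasisOfOrder A h ∧
    ∀ B : Set ℕ, B ⊂ A → ¬ IsAsymptoticBasisOfOrder B h

/-- A maximal asymptotic nonbasis of order `h` is a set that is not an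
asymptotic basis of order `h`, but such that adjoining any element outside it
produces an asymptotic basis of order `h`. -/
def IsMaximalAsymptoticNonbasisOfOrder (A : Set ℕ) (h : ℕ) : Prop :=
  ¬ IsAsymptoticBasisOfOrder A h ∧
    ∀ b : ℕ, b ∉ A → IsAsymptoticBasisOfOrder (A ∪ {b}) h

private lemma exists_rep (n : ℕ) : ∃ f : Fin 4 → ℕ, ∑ i, (f i) ^ 2 = n := by
  obtain ⟨a, b, c, d, h⟩ := Nat.sum_four_squares n
  exact ⟨![a, b, c, d], by simpa [Fin.sum_univ_four] using h⟩

noncomputable def sq4 (n : ℕ) : Fin 4 → ℕ := (exists_rep n).choose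

lemma sq4_spec (n : ℕ) : ∑ i, (sq4 n i) ^ 2 = n := (exists_rep n).choose_spec

noncomputable def sq4q (n t : ℕ) : ℕ := if h : t < 4 then (sq4 n ⟨t, h⟩) ^ 2 else 0

noncomputable def psum (n j : ℕ) : ℕ := ∑ t ∈ Finset.range j, sq4q n t

lemma psum_zero (n : ℕ) : psum n 0 = 0 := by simp [psum]

lemma psum_succ (n j : ℕ) : psum n (j + 1) = psum n j + sq4q n j :=
  Finset.sum_range_succ _ j

lemma psum_four (n : ℕ) : psum n 4 = n := by
  calc psum n 4 = ∑ i : Fin 4, sq4q n ↑i := (Fin.sum_univ_eq_sum_range (fun t => sq4q n t) 4).symm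
    _ = ∑ i : Fin 4, (sq4 n i) ^ 2 := Finset.sum_congr rfl fun i _ => by simp [sq4q, i.isLt]
    _ = n := sq4_spec n

lemma psum_mono (n : ℕ) {j j' : ℕ} (h : j ≤ j') : psum n j ≤ psum n j' :=
  Finset.sum_le_sum_of_subset (Finset.range_subset_range.2 h)

lemma countingFn_eq_card (A : Set ℕ) [DecidablePred (· ∈ A)] (n : ℕ) :
    countingFn A n = ((Finset.Icc 1 n).filter (· ∈ A)).card := by
  rw [countingFn,
    show A ∩ Set.Icc 1 n = ↑((Finset.Icc 1 n).filter (· ∈ A)) by ext x; simp; tauto,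
    Set.ncard_coe_finset]

lemma countingFn_mono {A B : Set ℕ} (h : A ⊆ B) (n : ℕ) :
    countingFn A n ≤ countingFn B n :=
  Set.ncard_le_ncard (Set.inter_subset_inter_left _ h)
    (Set.Finite.inter_of_right (Set.finite_Icc 1 n) B)

lemma sd_mul_le (A : Set ℕ) {n : ℕ} (hn : 0 < n) :
    shnirelmanDensity A * n ≤ (countingFn A n : ℝ) := by
  have hbdd : BddBelow (Set.range fun m : {m : ℕ // 0 < m} =>
      (countingFn A (m : ℕ) : ℝ) / ((m : ℕ) : ℝ)) := by
    refine ⟨0, fun x hx => ?_⟩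
    obtain ⟨m, rfl⟩ := hx
    positivity
  have h := ciInf_le hbdd (⟨n, hn⟩ : {m : ℕ // 0 < m})
  rw [shnirelmanDensity]
  have hn' : (0 : ℝ) < n := by exact_mod_cast hn
  calc (⨅ m : {m : ℕ // 0 < m}, (countingFn A (m : ℕ) : ℝ) / ((m : ℕ) : ℝ)) * n
      ≤ ((countingFn A n : ℝ) / n) * n := by
        exact mul_le_mul_of_nonneg_right h hn'.le
    _ = (countingFn A n : ℝ) := by field_simp

lemma le_sd (C : Set ℕ) (x : ℝ) (h : ∀ n : ℕ, 0 < n → x * n ≤ (countingFn C n : ℝ)) :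
    x ≤ shnirelmanDensity C := by
  refine le_ciInf fun m => ?_
  have hm : (0 : ℝ) < (m : ℕ) := by exact_mod_cast m.2
  rw [le_div_iff₀ hm]
  exact h m m.2


open Classical in
noncomputable def idx (A : Set ℕ) (a d : ℕ) : ℕ :=
  Nat.findGreatest (fun j => a + psum d j ∈ A) 4

open Classical in
lemma idx_le (A : Set ℕ) (a d : ℕ) : idx A a d ≤ 4 := Nat.findGreatest_le 4

open Classical in
lemma idx_mem (A : Set ℕ) (a d : ℕ) (ha : a ∈ A) : a + psum d (idx A a d) ∈ A := by
  unfold idx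
  exact Nat.findGreatest_spec (P := fun j => a + psum d j ∈ A) (m := 0) (Nat.zero_le 4)
    (by simpa [psum_zero] using ha)

open Classical in
lemma idx_ne4 (A : Set ℕ) (a d : ℕ) (ha : a ∈ A) (hd : a + psum d 4 ∉ A) :
    idx A a d ≠ 4 := fun h => hd (h ▸ idx_mem A a d ha)

open Classical in
lemma idx_not_mem (A : Set ℕ) (a d : ℕ) (ha : a ∈ A) (hd : a + psum d 4 ∉ A) :
    a + psum d (idx A a d + 1) ∉ A := by
  have h4 := idx_ne4 A a d ha hd
  have hle := idx_le A a d
  have hlt : idx A a d + 1 ≤ 4 := by omega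
  have hgt : Nat.findGreatest (fun j => a + psum d j ∈ A) 4 < idx A a d + 1 := by
    unfold idx
    exact Nat.lt_succ_self _
  exact Nat.findGreatest_is_greatest (P := fun j => a + psum d j ∈ A) (n := 4) hgt hlt


lemma final_arith (α ε : ℝ) (h0 : 0 < α) (h1 : α < 1)
    (hε : ε = α * (1 - α) ^ 2 / 128) {n g tc cn caA caC : ℝ}
    (e1 : 0 < n) (hgR : (1 - α - ε) * n ≤ g)
    (hTlowR : α * (g / 2) * (g / 2) ≤ tc)
    (hAn : α * n ≤ caA) (hCup : tc ≤ cn * (n * 5)) (hCnt : caA + cn ≤ caC) :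
    (α + ε) * n ≤ caC := by
  have h1α : (0 : ℝ) < 1 - α := by linarith
  have ht : (0 : ℝ) ≤ α * (1 - α) ^ 2 := by positivity
  have hεsmall : ε ≤ (1 - α) / 128 := by
    rw [hε]
    have : α * (1 - α) ^ 2 ≤ 1 - α := by nlinarith
    linarith
  have e2 : (0 : ℝ) ≤ 1 - α - ε := by linarith
  have hgs : ((1 - α - ε) * n) ^ 2 ≤ g ^ 2 :=
    pow_le_pow_left₀ (mul_nonneg e2 e1.le) hgR 2
  have h127 : (127 : ℝ) / 128 * (1 - α) ≤ 1 - α - ε := by linarith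
  have s1 : ((127 : ℝ) / 128 * (1 - α)) ^ 2 ≤ (1 - α - ε) ^ 2 :=
    pow_le_pow_left₀ (by positivity) h127 2
  have s2 : α * ((127 : ℝ) / 128 * (1 - α)) ^ 2 ≤ α * (1 - α - ε) ^ 2 :=
    mul_le_mul_of_nonneg_left s1 h0.le
  have s3 : 20 * ε ≤ α * (1 - α - ε) ^ 2 := by
    have hq : α * ((127 : ℝ) / 128 * (1 - α)) ^ 2 = (16129 / 16384) * (α * (1 - α) ^ 2) := by
      ring
    have hε20 : 20 * ε = (5 / 32) * (α * (1 - α) ^ 2) := by rw [hε]; ring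
    linarith [s2, ht]
  have s4 : 20 * ε * n ^ 2 ≤ α * g ^ 2 := by
    have u1 := mul_le_mul_of_nonneg_left hgs h0.le
    have u2 := mul_le_mul_of_nonneg_right s3 (sq_nonneg n)
    nlinarith [u1, u2]
  have hlast : ε * n ≤ cn := by
    have h5 : ε * n * (5 * n) ≤ cn * (5 * n) := by
      calc ε * n * (5 * n) = (20 * ε * n ^ 2) / 4 := by ring
        _ ≤ (α * g ^ 2) / 4 := by linarith
        _ = α * (g / 2) * (g / 2) := by ring
        _ ≤ tc := hTlowR
        _ ≤ cn * (n * 5) := hCup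
        _ = cn * (5 * n) := by ring
    exact le_of_mul_le_mul_right h5 (by positivity)
  calc (α + ε) * n = α * n + ε * n := by ring
    _ ≤ caA + cn := add_le_add hAn hlast
    _ ≤ caC := hCnt

set_option maxHeartbeats 1000000 in
lemma key_bound (A : Set ℕ) (α ε : ℝ)
    (hA : ∀ m : ℕ, 0 < m → α * m ≤ (countingFn A m : ℝ))
    (h0 : 0 < α) (h1 : α < 1) (hε : ε = α * (1 - α) ^ 2 / 128) (n : ℕ) (hn : 0 < n) :
    (α + ε) * n ≤ (countingFn (A + {m : ℕ | ∃ j : ℕ, m = j ^ 2}) n : ℝ) := by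
  classical
  set S : Set ℕ := {m : ℕ | ∃ j : ℕ, m = j ^ 2} with hS
  set C : Set ℕ := A + S with hC
  have h0S : (0 : ℕ) ∈ S := ⟨0, by norm_num⟩
  have hAC : A ⊆ C := by
    intro a ha
    have := Set.add_mem_add ha h0S
    simpa using this
  have h1α : (0 : ℝ) < 1 - α := by linarith
  have hεpos : 0 < ε := by rw [hε]; positivity
  have hεsmall : ε ≤ (1 - α) / 128 := by
    rw [hε]
    have : α * (1 - α) ^ 2 ≤ 1 - α := by nlinarith
    linarith
  by_cases hbig : (α + ε) * n ≤ (countingFn A n : ℝ)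
  · calc (α + ε) * n ≤ (countingFn A n : ℝ) := hbig
      _ ≤ (countingFn C n : ℝ) := by exact_mod_cast countingFn_mono hAC n
  push_neg at hbig
  set g : ℕ := n - countingFn A n with hg
  have hAn_le : countingFn A n ≤ n := by
    rw [countingFn_eq_card]
    exact (Finset.card_filter_le _ _).trans (by simp)
  have hgR : (1 - α - ε) * n ≤ (g : ℝ) := by
    have hcast : (g : ℝ) = (n : ℝ) - (countingFn A n : ℝ) := by
      rw [hg]; push_cast [Nat.cast_sub hAn_le]; ring
    linarith
  -- gap set, restricted to large gaps
  set G' : Finset ℕ := (Finset.Icc 1 n).filter (fun k => k ∉ A ∧ g / 2 < k) with hG'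
  have hG'card : g - g / 2 ≤ G'.card := by
    have hsplit1 : ((Finset.Icc 1 n).filter (· ∈ A)).card
        + ((Finset.Icc 1 n).filter (fun k => ¬ k ∈ A)).card = n := by
      rw [Finset.card_filter_add_card_filter_not]; simp
    set G : Finset ℕ := (Finset.Icc 1 n).filter (fun k => ¬ k ∈ A) with hGdef
    have hGcard : G.card = g := by
      have := countingFn_eq_card A n
      omega
    have hsplit2 : (G.filter (fun k => g / 2 < k)).card
        + (G.filter (fun k => ¬ g / 2 < k)).card = G.card :=
      Finset.card_filter_add_card_filter_not _
    have hsmall : (G.filter (fun k => ¬ g / 2 < k)).card ≤ g / 2 := by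
      have hsub : G.filter (fun k => ¬ g / 2 < k) ⊆ Finset.Icc 1 (g / 2) := by
        intro k hk
        simp only [hGdef, Finset.mem_filter, Finset.mem_Icc] at hk ⊢
        omega
      calc (G.filter (fun k => ¬ g / 2 < k)).card ≤ (Finset.Icc 1 (g / 2)).card :=
            Finset.card_le_card hsub
        _ = g / 2 := by simp
    have hGG' : G'.card = (G.filter (fun k => g / 2 < k)).card := by
      rw [hG', hGdef, Finset.filter_filter]
    omega
  -- the pair set
  set T : Finset (ℕ × ℕ) :=
    ((Finset.Icc 1 n) ×ˢ G').filter (fun p => p.1 ∈ A ∧ p.1 < p.2) with hT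
  have hTmem : ∀ p ∈ T, p.1 ∈ A ∧ p.2 ∉ A ∧ 1 ≤ p.1 ∧ p.1 < p.2 ∧ p.2 ≤ n ∧ g / 2 < p.2 := by
    intro p hp
    simp only [hT, hG', Finset.mem_filter, Finset.mem_product, Finset.mem_Icc] at hp
    tauto
  -- lower bound on T.card
  have hfib : ∀ k ∈ G', (T.filter (fun p => p.2 = k)).card = countingFn A k := by
    intro k hk
    simp only [hG', Finset.mem_filter, Finset.mem_Icc] at hk
    obtain ⟨⟨hk1, hkn⟩, hkA, hkg⟩ := hk
    have heq : T.filter (fun p => p.2 = k)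
        = ((Finset.Icc 1 k).filter (· ∈ A)).image (fun a => (a, k)) := by
      ext ⟨x, y⟩
      simp only [hT, hG', Finset.mem_filter, Finset.mem_product, Finset.mem_Icc,
        Finset.mem_image, Prod.mk.injEq]
      constructor
      · rintro ⟨⟨⟨⟨hx1, hxn⟩, -⟩, hxA, hxy⟩, rfl⟩
        exact ⟨x, ⟨⟨hx1, by omega⟩, hxA⟩, rfl, rfl⟩
      · rintro ⟨a, ⟨⟨ha1, hak⟩, haA⟩, rfl, rfl⟩
        have hne : a ≠ k := fun h => hkA (h ▸ haA)
        exact ⟨⟨⟨⟨ha1, by omega⟩, ⟨hk1, hkn⟩, hkA, hkg⟩, haA, by omega⟩, rfl⟩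
    rw [heq, Finset.card_image_of_injective _ (fun a b hab => congrArg Prod.fst hab),
      countingFn_eq_card]
  have hTcard : T.card = ∑ k ∈ G', countingFn A k := by
    rw [Finset.card_eq_sum_card_fiberwise (f := Prod.snd) (t := G')
      (fun p hp => by
        simp only [Finset.mem_coe, hT, Finset.mem_filter, Finset.mem_product] at hp
        exact hp.1.2)]
    exact Finset.sum_congr rfl hfib
  have hTlowR : α * ((g : ℝ) / 2) * ((g : ℝ) / 2) ≤ (T.card : ℝ) := by
    have hsum : ∀ k ∈ G', α * ((g : ℝ) / 2) ≤ (countingFn A k : ℝ) := by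
      intro k hk
      simp only [hG', Finset.mem_filter, Finset.mem_Icc] at hk
      have hk0 : 0 < k := by omega
      have hgk : (g : ℝ) / 2 ≤ (k : ℝ) := by
        have h2 : g < 2 * k := by omega
        have := (Nat.cast_lt (α := ℝ)).2 h2
        push_cast at this
        linarith
      calc α * ((g : ℝ) / 2) ≤ α * k := mul_le_mul_of_nonneg_left hgk h0.le
        _ ≤ _ := hA k hk0
    have h2 : (G'.card : ℝ) * (α * ((g : ℝ) / 2)) ≤ ∑ k ∈ G', (countingFn A k : ℝ) := by
      have := Finset.card_nsmul_le_sum G' (fun k => (countingFn A k : ℝ)) _ hsum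
      simpa [nsmul_eq_mul] using this
    have h3 : (g : ℝ) / 2 ≤ (G'.card : ℝ) := by
      have hh : g ≤ 2 * G'.card := by omega
      have := (Nat.cast_le (α := ℝ)).2 hh
      push_cast at this
      linarith
    have h4 : (T.card : ℝ) = ∑ k ∈ G', (countingFn A k : ℝ) := by
      rw [hTcard]; push_cast; ring
    have hαg : 0 ≤ α * ((g : ℝ) / 2) := by positivity
    nlinarith [mul_le_mul_of_nonneg_right h3 hαg]
  -- new elements
  set Cnew : Finset ℕ := (Finset.Icc 1 n).filter (fun c => c ∈ C ∧ c ∉ A) with hCnew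
  have hCnt : countingFn A n + Cnew.card ≤ countingFn C n := by
    rw [countingFn_eq_card A n, countingFn_eq_card C n]
    have hdisj : Disjoint ((Finset.Icc 1 n).filter (· ∈ A)) Cnew := by
      rw [Finset.disjoint_left]
      intro c hc1 hc2
      simp only [hCnew, Finset.mem_filter] at hc1 hc2
      exact hc2.2.2 hc1.2
    have hsub : (Finset.Icc 1 n).filter (· ∈ A) ∪ Cnew ⊆ (Finset.Icc 1 n).filter (· ∈ C) := by
      intro c hc
      rcases Finset.mem_union.1 hc with h | h <;>
        simp only [hCnew, Finset.mem_filter] at h ⊢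
      · exact ⟨h.1, hAC h.2⟩
      · exact ⟨h.1, h.2.1⟩
    calc ((Finset.Icc 1 n).filter (· ∈ A)).card + Cnew.card
        = ((Finset.Icc 1 n).filter (· ∈ A) ∪ Cnew).card :=
          (Finset.card_union_of_disjoint hdisj).symm
      _ ≤ _ := Finset.card_le_card hsub
  -- the injection
  have hTup : T.card ≤ Cnew.card * (n * 5) := by
    set F : ℕ × ℕ → ℕ × ℕ × ℕ := fun p =>
      (p.1 + psum (p.2 - p.1) (idx A p.1 (p.2 - p.1) + 1),
        (p.2 - p.1, idx A p.1 (p.2 - p.1))) with hF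
    have hmaps : ∀ p ∈ T, F p ∈ Cnew ×ˢ ((Finset.Icc 1 n) ×ˢ (Finset.range 5)) := by
      intro p hp
      obtain ⟨haA, hkA, ha1, hak, hkn, -⟩ := hTmem p hp
      have hs4 : p.1 + psum (p.2 - p.1) 4 = p.2 := by rw [psum_four]; omega
      have hk4 : p.1 + psum (p.2 - p.1) 4 ∉ A := by rw [hs4]; exact hkA
      have hPi := idx_mem A p.1 (p.2 - p.1) haA
      have hi3 : idx A p.1 (p.2 - p.1) < 4 :=
        lt_of_le_of_ne (idx_le A p.1 (p.2 - p.1)) (idx_ne4 A p.1 (p.2 - p.1) haA hk4)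
      have hnP := idx_not_mem A p.1 (p.2 - p.1) haA hk4
      have hcle : p.1 + psum (p.2 - p.1) (idx A p.1 (p.2 - p.1) + 1) ≤ p.2 := by
        have := psum_mono (p.2 - p.1) (show idx A p.1 (p.2 - p.1) + 1 ≤ 4 by omega)
        omega
      have hcC : p.1 + psum (p.2 - p.1) (idx A p.1 (p.2 - p.1) + 1) ∈ C := by
        rw [psum_succ, ← add_assoc, hC]
        exact Set.add_mem_add hPi ⟨sq4 (p.2 - p.1) ⟨idx A p.1 (p.2 - p.1), hi3⟩,
          by simp [sq4q, hi3]⟩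
      simp only [hF, Finset.mem_product, hCnew, Finset.mem_filter, Finset.mem_Icc,
        Finset.mem_range]
      exact ⟨⟨⟨by omega, by omega⟩, hcC, hnP⟩, ⟨by omega, by omega⟩, by omega⟩
    have hinj : Set.InjOn F ↑T := by
      intro p hp q hq hpq
      obtain ⟨-, -, -, hak, -, -⟩ := hTmem p (by exact_mod_cast hp)
      obtain ⟨-, -, -, hak', -, -⟩ := hTmem q (by exact_mod_cast hq)
      have h1 := congrArg (fun x : ℕ × ℕ × ℕ => x.2.1) hpq
      have h2 := congrArg (fun x : ℕ × ℕ × ℕ => x.2.2) hpq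
      have h0' := congrArg (fun x : ℕ × ℕ × ℕ => x.1) hpq
      simp only [hF] at h1 h2 h0'
      rw [h1] at h2 h0'
      rw [h2] at h0'
      have hp1 : p.1 = q.1 := by omega
      have hp2 : p.2 = q.2 := by omega
      exact Prod.ext hp1 hp2
    calc T.card ≤ (Cnew ×ˢ ((Finset.Icc 1 n) ×ˢ (Finset.range 5))).card :=
          Finset.card_le_card_of_injOn F hmaps hinj
      _ = Cnew.card * (n * 5) := by simp [Finset.card_product]
  -- final arithmetic
  have e1 : (0 : ℝ) < n := by exact_mod_cast hn
  have e2 : (0 : ℝ) ≤ 1 - α - ε := by linarith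
  have hAn : α * n ≤ (countingFn A n : ℝ) := hA n hn
  have hCup : (T.card : ℝ) ≤ (Cnew.card : ℝ) * (n * 5) := by exact_mod_cast hTup
  have hCnt' : (countingFn A n : ℝ) + (Cnew.card : ℝ) ≤ (countingFn C n : ℝ) := by
    exact_mod_cast hCnt
  exact final_arith α ε h0 h1 hε e1 hgR hTlowR hAn hCup hCnt'

theorem khinchin_squares_essential_component (A : Set ℕ)
    (h0 : 0 < shnirelmanDensity A) (h1 : shnirelmanDensity A < 1) :
    shnirelmanDensity A < shnirelmanDensity (A + {m : ℕ | ∃ n : ℕ, m = n ^ 2}) := by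
  set α := shnirelmanDensity A with hα
  have hA : ∀ m : ℕ, 0 < m → α * m ≤ (countingFn A m : ℝ) := fun m hm => sd_mul_le A hm
  have h1α : (0 : ℝ) < 1 - α := by linarith
  have hεpos : 0 < α * (1 - α) ^ 2 / 128 := by positivity
  have hkey := le_sd (A + {m : ℕ | ∃ n : ℕ, m = n ^ 2}) (α + α * (1 - α) ^ 2 / 128)
    (fun n hn => key_bound A α (α * (1 - α) ^ 2 / 128) hA h0 h1 rfl n hn)
  linarith
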